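/- If ‖y_k − K x_k‖ ≤ δ for k = 1,…,n, then the operator K_n = Y_n Ξ Λ^{-1} U* satisfies ‖(K_n − K) U Λ‖_HS ≤ 2 √n · δ. -/

import Mathlib

open scoped RealInnerProductSpace BigOperators

private lemma key_ineq {G : Type*} [NormedAddCommGroup G] [InnerProductSpace ℝ G]
    {n p : ℕ} (Ξ : Matrix (Fin n) (Fin p) ℝ)
    (hΞ : ∀ j j', (∑ k, Ξ k j * Ξ k j') = if j = j' then (1:ℝ) else 0)
    (e : Fin n → G) :
    ∑ j, ‖∑ k, Ξ k j • e k‖ ^ 2 ≤ ∑ k, ‖e k‖ ^ 2 := by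
  set c : Fin p → G := fun j => ∑ k, Ξ k j • e k with hc
  set v : Fin n → G := fun m => ∑ j, Ξ m j • c j with hv
  have hA : ∑ m, ⟪v m, e m⟫ = ∑ j, ‖c j‖ ^ 2 := by
    calc ∑ m, ⟪v m, e m⟫ = ∑ m, ∑ j, Ξ m j * ⟪c j, e m⟫ := by
          simp [hv, sum_inner, real_inner_smul_left]
      _ = ∑ j, ⟪c j, ∑ m, Ξ m j • e m⟫ := by
          rw [Finset.sum_comm]
          simp [inner_sum, real_inner_smul_right]
      _ = ∑ j, ‖c j‖ ^ 2 := by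
          refine Finset.sum_congr rfl fun j _ => ?_
          rw [show (∑ m, Ξ m j • e m) = c j from rfl, real_inner_self_eq_norm_sq]
  have hvc : ∀ j, ∑ m, Ξ m j • v m = c j := by
    intro j
    calc ∑ m, Ξ m j • v m = ∑ m, ∑ j', (Ξ m j * Ξ m j') • c j' := by
          simp [hv, Finset.smul_sum, smul_smul]
      _ = ∑ j', (∑ m, Ξ m j * Ξ m j') • c j' := by
          rw [Finset.sum_comm]
          simp [Finset.sum_smul]
      _ = c j := by
          simp only [hΞ]
          simp
  have hB : ∑ m, ‖v m‖ ^ 2 = ∑ j, ‖c j‖ ^ 2 := by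
    calc ∑ m, ‖v m‖ ^ 2 = ∑ m, ∑ j, Ξ m j * ⟪c j, v m⟫ := by
          refine Finset.sum_congr rfl fun m _ => ?_
          rw [← real_inner_self_eq_norm_sq, hv]
          simp only [sum_inner, real_inner_smul_left]
      _ = ∑ j, ⟪c j, ∑ m, Ξ m j • v m⟫ := by
          rw [Finset.sum_comm]
          simp [inner_sum, real_inner_smul_right]
      _ = ∑ j, ‖c j‖ ^ 2 := by
          refine Finset.sum_congr rfl fun j _ => ?_
          rw [hvc j, real_inner_self_eq_norm_sq]
  have h0 : (0:ℝ) ≤ ∑ m, ‖e m - v m‖ ^ 2 :=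
    Finset.sum_nonneg fun m _ => by positivity
  have hexp : ∑ m, ‖e m - v m‖ ^ 2
      = ∑ m, (‖e m‖ ^ 2 - 2 * ⟪v m, e m⟫ + ‖v m‖ ^ 2) := by
    refine Finset.sum_congr rfl fun m _ => ?_
    rw [norm_sub_sq_real, real_inner_comm]
  rw [Finset.sum_add_distrib, Finset.sum_sub_distrib, ← Finset.mul_sum] at hexp
  linarith

/-- If `‖y k − K (x k)‖ ≤ δ` for all `k`, then the data-driven operator
`K_n = Y Ξ Λ⁻¹ U*` satisfies `‖(K_n − K) U Λ‖_HS ≤ 2 √n δ`, where `X = U Λ Ξ*`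
is the SVD of the image matrix. The column of `(K_n − K) U Λ` with index `j` is
`σ j • (K_n (U j) − K (U j))`, and the HS norm is the square root of the sum of
squared column norms. -/
theorem stmt3 {H G : Type*} [NormedAddCommGroup H] [InnerProductSpace ℝ H]
    [NormedAddCommGroup G] [InnerProductSpace ℝ G]
    (K : H →L[ℝ] G) {n p : ℕ}
    (x : Fin n → H) (U : Fin p → H) (hU : Orthonormal ℝ U)
    (Ξ : Matrix (Fin n) (Fin p) ℝ) (σ : Fin p → ℝ) (hσ : ∀ j, 0 < σ j)
    (hΞ : ∀ j j', (∑ k, Ξ k j * Ξ k j') = if j = j' then (1:ℝ) else 0)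
    (hX : ∀ k, x k = ∑ j, (σ j * Ξ k j) • U j)
    (y : Fin n → G) (δ : ℝ) (hδ : 0 ≤ δ) (hy : ∀ k, ‖y k - K (x k)‖ ≤ δ) :
    letI Kn : H → G := fun h => ∑ j, ((σ j)⁻¹ * ⟪U j, h⟫) • ∑ k, Ξ k j • y k
    Real.sqrt (∑ j, ‖σ j • (Kn (U j) - K (U j))‖ ^ 2) ≤ 2 * Real.sqrt n * δ := by
  set Kn : H → G := fun h => ∑ j, ((σ j)⁻¹ * ⟪U j, h⟫) • ∑ k, Ξ k j • y k with hKn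
  have hcol : ∀ j, σ j • (Kn (U j) - K (U j)) = ∑ k, Ξ k j • (y k - K (x k)) := by
    intro j
    have h1 : Kn (U j) = (σ j)⁻¹ • ∑ k, Ξ k j • y k := by
      simp only [hKn]
      rw [Finset.sum_eq_single j]
      · rw [real_inner_self_eq_norm_sq, hU.1 j]
        norm_num
      · intro j' _ hne
        rw [hU.2 hne]
        simp
      · simp
    have h2 : ∑ k, Ξ k j • K (x k) = σ j • K (U j) := by
      calc ∑ k, Ξ k j • K (x k)
          = ∑ k, ∑ j', (σ j' * (Ξ k j * Ξ k j')) • K (U j') := by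
            refine Finset.sum_congr rfl fun k _ => ?_
            rw [hX k, map_sum, Finset.smul_sum]
            refine Finset.sum_congr rfl fun j' _ => ?_
            rw [map_smul, smul_smul]
            congr 1
            ring
        _ = ∑ j', (σ j' * ∑ k, Ξ k j * Ξ k j') • K (U j') := by
            rw [Finset.sum_comm]
            simp [Finset.mul_sum, Finset.sum_smul]
        _ = σ j • K (U j) := by
            simp only [hΞ]
            simp
    rw [smul_sub, h1, smul_smul, mul_inv_cancel₀ (hσ j).ne', one_smul, ← h2,
      ← Finset.sum_sub_distrib]
    simp [smul_sub]
  have hkey := key_ineq Ξ hΞ (fun k => y k - K (x k))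
  have hsum : ∑ j, ‖σ j • (Kn (U j) - K (U j))‖ ^ 2 ≤ n * δ ^ 2 := by
    calc ∑ j, ‖σ j • (Kn (U j) - K (U j))‖ ^ 2
        = ∑ j, ‖∑ k, Ξ k j • (y k - K (x k))‖ ^ 2 := by
          refine Finset.sum_congr rfl fun j _ => by rw [hcol j]
      _ ≤ ∑ k, ‖y k - K (x k)‖ ^ 2 := hkey
      _ ≤ ∑ _k : Fin n, δ ^ 2 := by
          refine Finset.sum_le_sum fun k _ => ?_
          exact pow_le_pow_left₀ (norm_nonneg _) (hy k) 2
      _ = n * δ ^ 2 := by simp [mul_comm]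
  calc Real.sqrt (∑ j, ‖σ j • (Kn (U j) - K (U j))‖ ^ 2)
      ≤ Real.sqrt (n * δ ^ 2) := Real.sqrt_le_sqrt hsum
    _ = Real.sqrt n * δ := by
        rw [Real.sqrt_mul (Nat.cast_nonneg n), Real.sqrt_sq hδ]
    _ ≤ 2 * Real.sqrt n * δ := by nlinarith [Real.sqrt_nonneg (n:ℝ), Real.sqrt_nonneg (n:ℝ)]
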